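/- Let c₁ < c₂ be real numbers and set c_m = (c₁ + c₂)/2. Let χ⁰ : ℝ → ℝ satisfy 0 ≤ χ⁰ ≤ 1, χ⁰(x) = 1 for x ≤ 0 and χ⁰(x) = 0 for x ≥ 1. For h > 0 define χ̃₁(t,x) = χ⁰((x − h/4 − c_m t)/(h/4)), χ̃₂ = 1 − χ̃₁, and χᵢ = χ̃ᵢ/√(χ̃₁² + χ̃₂²) for i = 1, 2. Then for every ε > 0 there exists a constant C_ε > 0 such that for all h ≥ 1, all t ≥ 0 and all x ∈ ℝ: exp(−ε|x − c₁t|) · χ₂(t,x) ≤ C_ε/h and exp(−ε|x − h − c₂t|) · χ₁(t,x) ≤ C_ε/h. -/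

import Mathlib

open Real

lemma frac_le_one {a b : ℝ} (ha : 0 ≤ a) :
    a / Real.sqrt (a ^ 2 + b ^ 2) ≤ 1 := by
  rcases eq_or_lt_of_le (add_nonneg (sq_nonneg a) (sq_nonneg b)) with h | h
  · have ha0 : a = 0 := by nlinarith [sq_nonneg a, sq_nonneg b]
    simp [ha0]
  · rw [div_le_one (Real.sqrt_pos.mpr h)]
    calc a = Real.sqrt (a ^ 2) := by rw [Real.sqrt_sq ha]
    _ ≤ Real.sqrt (a ^ 2 + b ^ 2) := Real.sqrt_le_sqrt (by nlinarith [sq_nonneg b])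

lemma exp_mul_le (ε : ℝ) (hε : 0 < ε) (h : ℝ) (hh : 1 ≤ h) :
    Real.exp (-(ε * h / 4)) * h ≤ 64 / ε ^ 2 := by
  have hx : 0 ≤ ε * h / 8 := by positivity
  have h1 : ε * h / 8 + 1 ≤ Real.exp (ε * h / 8) := Real.add_one_le_exp _
  have h2 : Real.exp (ε * h / 8) * Real.exp (ε * h / 8) = Real.exp (ε * h / 4) := by
    rw [← Real.exp_add]; ring_nf
  have h3 : (ε * h / 8) ^ 2 ≤ Real.exp (ε * h / 4) := by nlinarith
  have h4 : 0 < Real.exp (ε * h / 4) := Real.exp_pos _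
  rw [Real.exp_neg]
  rw [inv_mul_le_iff₀ h4]
  have : ε ^ 2 * h ^ 2 / 64 ≤ Real.exp (ε * h / 4) := by nlinarith
  have hh2 : h ≤ h ^ 2 := by nlinarith
  have : 64 / ε ^ 2 * (ε ^ 2 * h ^ 2 / 64) = h ^ 2 := by field_simp
  nlinarith [Real.exp_pos (ε * h / 4)]

/-- Localization estimates for the partition-of-unity cut-offs `χ₁, χ₂` adapted to
two solitary waves centered at `x = c₁ t` and `x = h + c₂ t`. -/
theorem cutoff_localization_estimate
    (c₁ c₂ : ℝ) (hc : c₁ < c₂) (χ0 : ℝ → ℝ)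
    (hrange : ∀ x : ℝ, 0 ≤ χ0 x ∧ χ0 x ≤ 1)
    (hleft : ∀ x : ℝ, x ≤ 0 → χ0 x = 1)
    (hright : ∀ x : ℝ, 1 ≤ x → χ0 x = 0)
    (ε : ℝ) (hε : 0 < ε) :
    ∃ C : ℝ, 0 < C ∧ ∀ h : ℝ, 1 ≤ h → ∀ t : ℝ, 0 ≤ t → ∀ x : ℝ,
      Real.exp (-ε * |x - c₁ * t|) *
        ((1 - χ0 ((x - h / 4 - ((c₁ + c₂) / 2) * t) / (h / 4))) /
          Real.sqrt ((χ0 ((x - h / 4 - ((c₁ + c₂) / 2) * t) / (h / 4))) ^ 2 +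
            (1 - χ0 ((x - h / 4 - ((c₁ + c₂) / 2) * t) / (h / 4))) ^ 2)) ≤ C / h ∧
      Real.exp (-ε * |x - h - c₂ * t|) *
        ((χ0 ((x - h / 4 - ((c₁ + c₂) / 2) * t) / (h / 4))) /
          Real.sqrt ((χ0 ((x - h / 4 - ((c₁ + c₂) / 2) * t) / (h / 4))) ^ 2 +
            (1 - χ0 ((x - h / 4 - ((c₁ + c₂) / 2) * t) / (h / 4))) ^ 2)) ≤ C / h := by
  refine ⟨64 / ε ^ 2, by positivity, ?_⟩
  intro h hh t ht x
  have hh4 : (0:ℝ) < h / 4 := by linarith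
  have hhpos : (0:ℝ) < h := by linarith
  set y := (x - h / 4 - ((c₁ + c₂) / 2) * t) / (h / 4) with hy
  obtain ⟨hy0, hy1⟩ := hrange y
  have hkey : Real.exp (-(ε * h / 4)) ≤ 64 / ε ^ 2 / h := by
    rw [le_div_iff₀ hhpos]; exact exp_mul_le ε hε h hh
  constructor
  · by_cases hc1 : y ≤ 0
    · rw [hleft y hc1]
      simp
      positivity
    · push_neg at hc1
      have hxy : 0 < x - h / 4 - ((c₁ + c₂) / 2) * t := by
        by_contra hcon
        push_neg at hcon
        have : y ≤ 0 := div_nonpos_of_nonpos_of_nonneg hcon (le_of_lt hh4)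
        linarith
      have hdist : h / 4 ≤ x - c₁ * t := by nlinarith
      have habs : h / 4 ≤ |x - c₁ * t| := le_trans hdist (le_abs_self _)
      have hexp : Real.exp (-ε * |x - c₁ * t|) ≤ Real.exp (-(ε * h / 4)) := by
        apply Real.exp_le_exp.mpr; nlinarith
      have hfrac : (1 - χ0 y) / Real.sqrt ((χ0 y) ^ 2 + (1 - χ0 y) ^ 2) ≤ 1 := by
        have := frac_le_one (a := 1 - χ0 y) (b := χ0 y) (by linarith)
        calc (1 - χ0 y) / Real.sqrt ((χ0 y) ^ 2 + (1 - χ0 y) ^ 2)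
            = (1 - χ0 y) / Real.sqrt ((1 - χ0 y) ^ 2 + (χ0 y) ^ 2) := by ring_nf
          _ ≤ 1 := this
      have hfracnn : 0 ≤ (1 - χ0 y) / Real.sqrt ((χ0 y) ^ 2 + (1 - χ0 y) ^ 2) :=
        div_nonneg (by linarith) (Real.sqrt_nonneg _)
      calc Real.exp (-ε * |x - c₁ * t|) *
            ((1 - χ0 y) / Real.sqrt ((χ0 y) ^ 2 + (1 - χ0 y) ^ 2))
          ≤ Real.exp (-(ε * h / 4)) * 1 :=
            mul_le_mul hexp hfrac hfracnn (le_of_lt (Real.exp_pos _))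
        _ ≤ 64 / ε ^ 2 / h := by rw [mul_one]; exact hkey
  · by_cases hc2 : 1 ≤ y
    · rw [hright y hc2]
      simp
      positivity
    · push_neg at hc2
      have hxy : x - h / 4 - ((c₁ + c₂) / 2) * t < h / 4 := by
        have := (div_lt_one hh4).mp hc2
        linarith
      have hdist : x - h - c₂ * t ≤ -(h / 4) := by nlinarith
      have habs : h / 4 ≤ |x - h - c₂ * t| :=
        le_trans (by linarith) (neg_le_abs _)
      have hexp : Real.exp (-ε * |x - h - c₂ * t|) ≤ Real.exp (-(ε * h / 4)) := by
        apply Real.exp_le_exp.mpr; nlinarith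
      have hfrac : χ0 y / Real.sqrt ((χ0 y) ^ 2 + (1 - χ0 y) ^ 2) ≤ 1 :=
        frac_le_one hy0
      have hfracnn : 0 ≤ χ0 y / Real.sqrt ((χ0 y) ^ 2 + (1 - χ0 y) ^ 2) :=
        div_nonneg hy0 (Real.sqrt_nonneg _)
      calc Real.exp (-ε * |x - h - c₂ * t|) *
            (χ0 y / Real.sqrt ((χ0 y) ^ 2 + (1 - χ0 y) ^ 2))
          ≤ Real.exp (-(ε * h / 4)) * 1 :=
            mul_le_mul hexp hfrac hfracnn (le_of_lt (Real.exp_pos _))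
        _ ≤ 64 / ε ^ 2 / h := by rw [mul_one]; exact hkey
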